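/- arXiv:1302.0657 — 2 statements merged into one kernel-verified Lean document; each statement's English description precedes it below -/
import Mathlib

section
/- There is a universal constant C such that for every x ∈ B_1(0) with x ≠ 0, ∫_{B_1(0)} (1 − |y|²) / (|x − y| · |x ȳ − 1|) dy ≤ C/|x|. (In particular the bound |x ȳ − 1| ≥ |x|(1 − |y|) holds for all y ∈ B_1(0).) -/
open MeasureTheory Filter Metric Real Topology

lemma lint_ball_two :
    ∫⁻ z in ball (0 : ℂ) 2, ENNReal.ofReal ((‖z‖)⁻¹)
      ≤ ENNReal.ofReal (32 * π) := by
  have hpt : ∀ z : ℂ,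
      (ball (0 : ℂ) 2).indicator (fun z => ENNReal.ofReal ((‖z‖)⁻¹)) z
        ≤ ∑' n : ℕ, ENNReal.ofReal ((2:ℝ)^n) *
            (ball (0 : ℂ) (4 * (2⁻¹:ℝ)^n)).indicator 1 z := by
    intro z
    by_cases hz : z ∈ ball (0 : ℂ) 2
    · rw [Set.indicator_of_mem hz]
      by_cases h0 : z = 0
      · simp [h0]
      · have habs : 0 < ‖z‖ := norm_pos_iff.mpr h0
        have hz2 : ‖z‖ < 2 := by
          simpa [mem_ball_zero_iff] using hz
        have hex : ∃ n : ℕ, (2⁻¹:ℝ)^n < ‖z‖ :=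
          exists_pow_lt_of_lt_one habs (by norm_num)
        obtain ⟨n, hn⟩ : ∃ m, Nat.find hex = m := ⟨_, rfl⟩
        have h1 : (2⁻¹:ℝ)^n < ‖z‖ := hn ▸ Nat.find_spec hex
        have h2 : ‖z‖ < 4 * (2⁻¹:ℝ)^n := by
          rcases Nat.eq_zero_or_pos n with h | h
          · rw [h]; norm_num; linarith
          · obtain ⟨m, rfl⟩ : ∃ m, n = m + 1 := ⟨n - 1, by omega⟩
            have hm : ¬ ((2⁻¹:ℝ)^m < ‖z‖) := Nat.find_min hex (by omega)
            push_neg at hm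
            have : (2⁻¹:ℝ)^m = 2 * (2⁻¹:ℝ)^(m+1) := by ring
            nlinarith [pow_pos (by norm_num : (0:ℝ) < 2⁻¹) (m+1)]
        have hmem : z ∈ ball (0 : ℂ) (4 * (2⁻¹:ℝ)^n) := by
          simpa [mem_ball_zero_iff] using h2
        calc ENNReal.ofReal ((‖z‖)⁻¹)
            ≤ ENNReal.ofReal ((2:ℝ)^n) * (ball (0 : ℂ) (4 * (2⁻¹:ℝ)^n)).indicator 1 z := by
              rw [Set.indicator_of_mem hmem]
              simp only [Pi.one_apply, mul_one]
              apply ENNReal.ofReal_le_ofReal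
              rw [inv_le_comm₀ habs (by positivity)]
              · calc ((2:ℝ)^n)⁻¹ = (2⁻¹:ℝ)^n := by rw [inv_pow]
                  _ ≤ ‖z‖ := h1.le
          _ ≤ _ := ENNReal.le_tsum n
    · rw [Set.indicator_of_notMem hz]; exact zero_le
  calc ∫⁻ z in ball (0 : ℂ) 2, ENNReal.ofReal ((‖z‖)⁻¹)
      = ∫⁻ z, (ball (0 : ℂ) 2).indicator (fun z => ENNReal.ofReal ((‖z‖)⁻¹)) z :=
        (lintegral_indicator measurableSet_ball _).symm
    _ ≤ ∫⁻ z, ∑' n : ℕ, ENNReal.ofReal ((2:ℝ)^n) *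
          (ball (0 : ℂ) (4 * (2⁻¹:ℝ)^n)).indicator 1 z := lintegral_mono hpt
    _ = ∑' n : ℕ, ∫⁻ z, ENNReal.ofReal ((2:ℝ)^n) *
          (ball (0 : ℂ) (4 * (2⁻¹:ℝ)^n)).indicator 1 z := by
        apply lintegral_tsum
        intro n
        exact ((measurable_one.indicator measurableSet_ball).const_mul _).aemeasurable
    _ = ∑' n : ℕ, ENNReal.ofReal ((2:ℝ)^n) * volume (ball (0 : ℂ) (4 * (2⁻¹:ℝ)^n)) := by
        congr 1; ext n
        rw [lintegral_const_mul _ (measurable_one.indicator measurableSet_ball),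
          lintegral_indicator measurableSet_ball]
        simp
    _ = ∑' n : ℕ, ENNReal.ofReal (16 * (2⁻¹:ℝ)^n) * (NNReal.pi : ENNReal) := by
        congr 1; ext n
        rw [Complex.volume_ball, ← ENNReal.ofReal_pow (by positivity), ← mul_assoc,
          ← ENNReal.ofReal_mul (by positivity)]
        congr 2
        have e : (2:ℝ)^n * (2⁻¹:ℝ)^n = 1 := by
          rw [← mul_pow]; norm_num
        calc (2:ℝ)^n * (4 * (2⁻¹:ℝ)^n)^2 = 16 * (((2:ℝ)^n * (2⁻¹:ℝ)^n) * (2⁻¹:ℝ)^n) := by ring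
          _ = 16 * (2⁻¹:ℝ)^n := by rw [e, one_mul]
    _ = (∑' n : ℕ, ENNReal.ofReal (16 * (2⁻¹:ℝ)^n)) * (NNReal.pi : ENNReal) :=
        ENNReal.tsum_mul_right
    _ = ENNReal.ofReal 32 * (NNReal.pi : ENNReal) := by
        congr 1
        rw [← ENNReal.ofReal_tsum_of_nonneg (fun n => by positivity)
          ((summable_geometric_of_lt_one (by norm_num) (by norm_num)).mul_left 16)]
        congr 1
        rw [tsum_mul_left, tsum_geometric_of_lt_one (by norm_num) (by norm_num)]
        norm_num
    _ = ENNReal.ofReal (32 * π) := by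
        rw [ENNReal.ofReal_mul (by norm_num)]
        congr 1
        rw [← NNReal.coe_real_pi, ENNReal.ofReal_coe_nnreal]

lemma lint_translate (x : ℂ) :
    ∫⁻ y in ball x 2, ENNReal.ofReal ((‖x - y‖)⁻¹)
      = ∫⁻ z in ball (0 : ℂ) 2, ENNReal.ofReal ((‖z‖)⁻¹) := by
  rw [← lintegral_indicator measurableSet_ball, ← lintegral_indicator measurableSet_ball,
    ← lintegral_add_left_eq_self
      (fun y => (ball x 2).indicator (fun y => ENNReal.ofReal ((‖x - y‖)⁻¹)) y) x]
  congr 1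
  ext z
  have hmem : x + z ∈ ball x 2 ↔ z ∈ ball (0 : ℂ) 2 := by
    simp [mem_ball, dist_eq_norm]
  have habs : ‖x - (x + z)‖ = ‖z‖ := by
    have : x - (x + z) = -z := by ring
    rw [this, norm_neg]
  by_cases h : z ∈ ball (0 : ℂ) 2
  · rw [Set.indicator_of_mem (hmem.2 h), Set.indicator_of_mem h, habs]
  · rw [Set.indicator_of_notMem (fun hc => h (hmem.1 hc)), Set.indicator_of_notMem h]

/-- There is a universal constant `C` such that for every `x ∈ B₁(0) ⊆ ℂ`
with `x ≠ 0`, `∫_{B₁(0)} (1 − |y|²) / (|x − y| |x ȳ − 1|) dy ≤ C/|x|`; in particular the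
bound `|x ȳ − 1| ≥ |x| (1 − |y|)` holds for all `y ∈ B₁(0)`. -/
theorem stmt_13 :
    ∃ C : ℝ, ∀ x ∈ ball (0 : ℂ) 1, x ≠ 0 →
      (∫ y in ball (0 : ℂ) 1,
          (1 - ‖y‖ ^ 2) /
            (‖x - y‖ * ‖x * (starRingEnd ℂ) y - 1‖))
        ≤ C / ‖x‖ ∧
      ∀ y ∈ ball (0 : ℂ) 1,
        ‖x‖ * (1 - ‖y‖) ≤ ‖x * (starRingEnd ℂ) y - 1‖ := by
  use 64 * π
  intro x hx hx0
  have ha : 0 < ‖x‖ := norm_pos_iff.mpr hx0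
  have hax : ‖x‖ < 1 := by
    simpa [mem_ball_zero_iff] using hx
  have key2 : ∀ y ∈ ball (0 : ℂ) 1,
      ‖x‖ * (1 - ‖y‖) ≤ ‖x * (starRingEnd ℂ) y - 1‖ := by
    intro y hy
    have hay : ‖y‖ < 1 := by
      simpa [mem_ball_zero_iff] using hy
    have h1 : (1:ℝ) - ‖x * (starRingEnd ℂ) y‖
        ≤ ‖x * (starRingEnd ℂ) y - 1‖ := by
      have h := norm_sub_norm_le 1 (x * (starRingEnd ℂ) y)
      rw [norm_one] at h
      calc (1:ℝ) - ‖x * (starRingEnd ℂ) y‖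
          ≤ ‖1 - x * (starRingEnd ℂ) y‖ := h
        _ = ‖x * (starRingEnd ℂ) y - 1‖ := by
            rw [← norm_neg]; congr 1; ring
    have habs : ‖x * (starRingEnd ℂ) y‖ = ‖x‖ * ‖y‖ := by
      rw [norm_mul, Complex.norm_conj]
    rw [habs] at h1
    nlinarith [norm_nonneg y]
  refine ⟨?_, key2⟩
  set a := ‖x‖ with ha_def
  set f : ℂ → ℝ := fun y => (1 - ‖y‖ ^ 2) /
      (‖x - y‖ * ‖x * (starRingEnd ℂ) y - 1‖) with hf
  have hnn : 0 ≤ᵐ[volume.restrict (ball (0:ℂ) 1)] f := by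
    filter_upwards [ae_restrict_mem measurableSet_ball] with y hy
    have hay : ‖y‖ < 1 := by
      simpa [mem_ball_zero_iff] using hy
    apply div_nonneg
    · nlinarith [norm_nonneg y]
    · positivity
  have hmeas : AEStronglyMeasurable f (volume.restrict (ball (0:ℂ) 1)) := by
    apply Measurable.aestronglyMeasurable
    apply Measurable.div
    · exact (continuous_const.sub ((continuous_norm.pow 2))).measurable
    · exact ((continuous_norm.comp (continuous_const.sub continuous_id)).mul
        (continuous_norm.comp
          ((continuous_const.mul (Complex.continuous_conj)).sub continuous_const))).measurable
  rw [integral_eq_lintegral_of_nonneg_ae hnn hmeas]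
  have hmeas2 : Measurable fun y : ℂ => ENNReal.ofReal ((‖x - y‖)⁻¹) :=
    ((continuous_norm.comp (continuous_const.sub continuous_id)).measurable.inv).ennreal_ofReal
  have hbound : ∫⁻ y in ball (0:ℂ) 1, ENNReal.ofReal (f y) ≤ ENNReal.ofReal (64 * π / a) := by
    have step1 : ∫⁻ y in ball (0:ℂ) 1, ENNReal.ofReal (f y)
        ≤ ∫⁻ y in ball (0:ℂ) 1, ENNReal.ofReal ((2 / a) * (‖x - y‖)⁻¹) := by
      apply lintegral_mono_ae
      filter_upwards [ae_restrict_mem measurableSet_ball] with y hy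
      apply ENNReal.ofReal_le_ofReal
      have hay : ‖y‖ < 1 := by
        simpa [mem_ball_zero_iff] using hy
      by_cases hxy : y = x
      · subst hxy
        simp only [hf, sub_self, norm_zero, zero_mul, div_zero]
        positivity
      · have hd : 0 < ‖x - y‖ := norm_pos_iff.mpr (sub_ne_zero.2 (Ne.symm hxy))
        have he : a * (1 - ‖y‖) ≤ ‖x * (starRingEnd ℂ) y - 1‖ :=
          key2 y hy
        have he0 : 0 < ‖x * (starRingEnd ℂ) y - 1‖ :=
          lt_of_lt_of_le (by nlinarith) he
        rw [hf]
        rw [div_le_iff₀ (by positivity)]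
        have hexp : 2 / a * (‖x - y‖)⁻¹ *
            (‖x - y‖ * ‖x * (starRingEnd ℂ) y - 1‖)
            = 2 * ‖x * (starRingEnd ℂ) y - 1‖ / a := by
          field_simp
        rw [hexp, le_div_iff₀ ha]
        nlinarith [norm_nonneg y]
    have step2 : ∫⁻ y in ball (0:ℂ) 1, ENNReal.ofReal ((2 / a) * (‖x - y‖)⁻¹)
        = ENNReal.ofReal (2 / a) * ∫⁻ y in ball (0:ℂ) 1, ENNReal.ofReal ((‖x - y‖)⁻¹) := by
      simp_rw [ENNReal.ofReal_mul (by positivity : (0:ℝ) ≤ 2 / a)]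
      rw [lintegral_const_mul _ hmeas2]
    have step3 : ∫⁻ y in ball (0:ℂ) 1, ENNReal.ofReal ((‖x - y‖)⁻¹)
        ≤ ENNReal.ofReal (32 * π) := by
      calc ∫⁻ y in ball (0:ℂ) 1, ENNReal.ofReal ((‖x - y‖)⁻¹)
          ≤ ∫⁻ y in ball x 2, ENNReal.ofReal ((‖x - y‖)⁻¹) := by
            apply lintegral_mono_set
            intro y hy
            have h1 : dist y x ≤ dist y 0 + dist 0 x := dist_triangle y 0 x
            have h2 : dist y 0 < 1 := hy
            have h3 : dist (0:ℂ) x < 1 := by rwa [dist_comm]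
            exact mem_ball.2 (by linarith)
        _ = ∫⁻ z in ball (0:ℂ) 2, ENNReal.ofReal ((‖z‖)⁻¹) := lint_translate x
        _ ≤ ENNReal.ofReal (32 * π) := lint_ball_two
    calc ∫⁻ y in ball (0:ℂ) 1, ENNReal.ofReal (f y)
        ≤ ENNReal.ofReal (2 / a) * ∫⁻ y in ball (0:ℂ) 1,
            ENNReal.ofReal ((‖x - y‖)⁻¹) := step2 ▸ step1
      _ ≤ ENNReal.ofReal (2 / a) * ENNReal.ofReal (32 * π) :=
          mul_le_mul_right step3 _
      _ = ENNReal.ofReal (64 * π / a) := by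
          rw [← ENNReal.ofReal_mul (by positivity)]
          congr 1
          field_simp
          ring
  exact ENNReal.toReal_le_of_le_ofReal
    (div_nonneg (by positivity) (norm_nonneg x)) hbound
end

section
/- Let ε > 0, let x ∈ B_1(0) with δ = d(x, ∂B_1(0)), and let t ∈ B_1(0) ∖ B(x, δε) with d(t, ∂B(x, δε)) ≥ δε. Set δ' = d(t, ∂(B_1(0) ∖ B(x, δε))) = min( d(t, ∂B(x, δε)), d(t, ∂B_1(0)) ). Then δ' ≤ d(t, ∂B_1(0)) ≤ (2 + 1/ε) δ'; that is, δ' is of the order of d(t, ∂B_1(0)). -/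
open MeasureTheory Filter Metric Real Topology

/-- The Euclidean plane. -/
abbrev E2 := EuclideanSpace ℝ (Fin 2)

lemma infDist_sphere_eq (t c : E2) (r : ℝ) (hr : 0 ≤ r) :
    infDist t (sphere c r) = |dist t c - r| := by
  have hne : (sphere c r).Nonempty := NormedSpace.sphere_nonempty.mpr hr
  apply le_antisymm
  · rcases eq_or_ne t c with rfl | htc
    · obtain ⟨y, hy⟩ := hne
      have h1 : dist t y = r := by rw [dist_comm]; exact mem_sphere.mp hy
      have := infDist_le_dist_of_mem (x := t) hy
      rw [h1] at this
      rw [dist_self, zero_sub, abs_neg, abs_of_nonneg hr]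
      exact this
    · have hd : 0 < dist t c := dist_pos.mpr htc
      set y : E2 := c + (r / dist t c) • (t - c) with hy
      have hys : y ∈ sphere c r := by
        have : dist y c = r := by
          rw [dist_eq_norm]
          simp only [hy, add_sub_cancel_left, norm_smul]
          rw [Real.norm_eq_abs, abs_of_nonneg (by positivity)]
          rw [← dist_eq_norm, div_mul_cancel₀ _ hd.ne']
        exact mem_sphere.mpr this
      have hty : dist t y = |dist t c - r| := by
        rw [dist_eq_norm]
        have : t - y = (1 - r / dist t c) • (t - c) := by
          rw [hy]; rw [sub_smul, one_smul]; abel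
        rw [this, norm_smul, Real.norm_eq_abs, ← dist_eq_norm]
        have h2 : (1 - r / dist t c) * dist t c = dist t c - r := by
          field_simp
        calc |1 - r / dist t c| * dist t c
            = |1 - r / dist t c| * |dist t c| := by rw [abs_of_pos hd]
          _ = |(1 - r / dist t c) * dist t c| := (abs_mul _ _).symm
          _ = |dist t c - r| := by rw [h2]
      calc infDist t (sphere c r) ≤ dist t y := infDist_le_dist_of_mem hys
        _ = _ := hty
  · by_contra h
    push_neg at h
    obtain ⟨y, hy, hlt⟩ := (infDist_lt_iff hne).mp h
    have hyc : dist y c = r := mem_sphere.mp hy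
    have : |dist t c - r| ≤ dist t y := by
      rw [← hyc]
      exact abs_dist_sub_le t y c
    linarith

/-- Let `ε > 0`, `x ∈ B₁(0)` with `δ = d(x, ∂B₁(0))`, and let
`t ∈ B₁(0) ∖ B(x, δε)` with `d(t, ∂B(x, δε)) ≥ δε`. Setting
`δ' = min(d(t, ∂B(x, δε)), d(t, ∂B₁(0)))`, one has
`δ' ≤ d(t, ∂B₁(0)) ≤ (2 + 1/ε) δ'`. -/
theorem stmt_14 (ε : ℝ) (hε : 0 < ε) (x t : E2)
    (hx : x ∈ ball (0 : E2) 1)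
    (δ : ℝ) (hδ : δ = infDist x (sphere (0 : E2) 1))
    (ht : t ∈ ball (0 : E2) 1 \ ball x (δ * ε))
    (ht2 : δ * ε ≤ infDist t (sphere x (δ * ε)))
    (δ' : ℝ)
    (hδ' : δ' = min (infDist t (sphere x (δ * ε))) (infDist t (sphere (0 : E2) 1))) :
    δ' ≤ infDist t (sphere (0 : E2) 1) ∧
      infDist t (sphere (0 : E2) 1) ≤ (2 + 1 / ε) * δ' := by
  obtain ⟨ht1, ht3⟩ := ht
  have hx1 : dist x 0 < 1 := mem_ball.mp hx
  have ht1' : dist t 0 < 1 := mem_ball.mp ht1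
  have hδval : δ = 1 - dist x 0 := by
    rw [hδ, infDist_sphere_eq _ _ _ zero_le_one, abs_of_nonpos (by linarith)]
    ring
  have hδpos : 0 < δ := by rw [hδval]; linarith [dist_nonneg (x := x) (y := (0:E2))]
  have hδε : 0 < δ * ε := mul_pos hδpos hε
  have htx : δ * ε ≤ dist t x := by
    by_contra h; push_neg at h; exact ht3 (mem_ball.mp (by simpa [mem_ball] using h))
  have hDa : infDist t (sphere x (δ * ε)) = dist t x - δ * ε := by
    rw [infDist_sphere_eq _ _ _ hδε.le, abs_of_nonneg (by linarith)]
  have hD1 : infDist t (sphere (0 : E2) 1) = 1 - dist t 0 := by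
    rw [infDist_sphere_eq _ _ _ zero_le_one, abs_of_nonpos (by linarith)]
    ring
  set Da := infDist t (sphere x (δ * ε)) with hDadef
  set D1 := infDist t (sphere (0 : E2) 1) with hD1def
  constructor
  · rw [hδ']; exact min_le_right _ _
  · have hD1nn : 0 ≤ D1 := infDist_nonneg
    have htri : dist x 0 ≤ dist t x + dist t 0 := by
      calc dist x 0 ≤ dist x t + dist t 0 := dist_triangle _ _ _
        _ = dist t x + dist t 0 := by rw [dist_comm]
    have hδle : δ ≤ Da / ε := by
      rw [le_div_iff₀ hε]; linarith [ht2]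
    have key : D1 ≤ (2 + 1 / ε) * Da := by
      have h1 : D1 ≤ δ + Da + δ * ε := by
        linarith [htri]
      have h2 : δ * ε ≤ Da := ht2
      have h3 : (2 + 1 / ε) * Da = Da / ε + Da + Da := by
        field_simp; ring
      rw [h3]; linarith
    have key2 : D1 ≤ (2 + 1 / ε) * D1 := by
      nlinarith [one_div_pos.mpr hε]
    rw [hδ']
    rcases min_cases Da D1 with ⟨hm, _⟩ | ⟨hm, _⟩ <;> rw [hm]
    · exact key
    · exact key2
end
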